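/- Let M be a Hilbert C*-module over ℂ^{m×m}, let w_1,…,w_n ∈ M, and let G be the n×n ℂ^{m×m}-valued Gram matrix with (s,t)-block ⟨w_s, w_t⟩, viewed as an mn×mn complex matrix with eigendecomposition G = V Σ V* where Σ = diag(σ_1,…,σ_l), σ_1 ≥ … ≥ σ_l > 0 are the nonzero eigenvalues, and v_s is the s-th column of V. Define p_s := σ_s^{-1/2} W[v_s, 0, …, 0] (the element of M obtained by acting W = [w_1,…,w_n] on the ℂ^{m×m}-vector whose first columns come from v_s and remaining columns are zero). Then {p_s}_{s=1}^l is an orthonormal system: ⟨p_s, p_s⟩ is a rank-one orthogonal projection in ℂ^{m×m} and ⟨p_s, p_t⟩ = 0 for s ≠ t; moreover every w_t lies in the ℂ^{m×m}-linear span of {p_s}_{s=1}^l. -/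

import Mathlib

open scoped Matrix.Norms.L2Operator ComplexOrder

/-- A Hilbert C*-module over the C*-algebra `ℂ^{m×m}` of `m × m` complex matrices (with the
operator norm): a right module with a matrix-valued inner product inducing the norm of `M`. -/
structure HilbertModuleMat (m : ℕ) (M : Type*) [NormedAddCommGroup M] where
  smul : M → Matrix (Fin m) (Fin m) ℂ → M
  inner : M → M → Matrix (Fin m) (Fin m) ℂ
  smul_add_vec : ∀ (u v : M) c, smul (u + v) c = smul u c + smul v c
  smul_add_alg : ∀ (u : M) c d, smul u (c + d) = smul u c + smul u d
  smul_mul : ∀ (u : M) c d, smul u (c * d) = smul (smul u c) d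
  smul_one : ∀ u : M, smul u 1 = u
  inner_add_right : ∀ u v w : M, inner u (v + w) = inner u v + inner u w
  inner_smul_right : ∀ (u v : M) c, inner u (smul v c) = inner u v * c
  inner_conj : ∀ u v : M, inner v u = star (inner u v)
  inner_self_posSemidef : ∀ u : M, (inner u u).PosSemidef
  inner_definite : ∀ u : M, inner u u = 0 → u = 0
  norm_eq : ∀ u : M, ‖u‖ = Real.sqrt ‖inner u u‖

/-- A vector `q` is *normalized* if `⟨q,q⟩` is a nonzero idempotent. -/
def HilbertModuleMat.Normalized {m : ℕ} {M : Type*} [NormedAddCommGroup M]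
    (h : HilbertModuleMat m M) (q : M) : Prop :=
  h.inner q q ≠ 0 ∧ h.inner q q * h.inner q q = h.inner q q

namespace HilbertModuleMat

variable {m : ℕ} {M : Type*} [NormedAddCommGroup M] (h : HilbertModuleMat m M)

lemma inner_sum_right' {ι : Type*} (s : Finset ι) (u : M) (f : ι → M) :
    h.inner u (∑ i ∈ s, f i) = ∑ i ∈ s, h.inner u (f i) :=
  map_sum (AddMonoidHom.mk' (h.inner u) (h.inner_add_right u)) f s

lemma inner_sum_left' {ι : Type*} (s : Finset ι) (u : M) (f : ι → M) :
    h.inner (∑ i ∈ s, f i) u = ∑ i ∈ s, h.inner (f i) u := by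
  rw [h.inner_conj u, inner_sum_right', star_sum]
  exact Finset.sum_congr rfl fun i _ => (h.inner_conj u (f i)).symm

lemma inner_smul_left' (u v : M) (c : Matrix (Fin m) (Fin m) ℂ) :
    h.inner (h.smul u c) v = star c * h.inner u v := by
  rw [h.inner_conj v, h.inner_smul_right, star_mul, ← h.inner_conj]

lemma inner_sub_right' (u a b : M) :
    h.inner u (a - b) = h.inner u a - h.inner u b := by
  have := h.inner_add_right u (a - b) b
  rw [sub_add_cancel] at this
  exact eq_sub_of_add_eq this.symm

lemma inner_sub_left' (u a b : M) :
    h.inner (a - b) u = h.inner a u - h.inner b u := by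
  rw [h.inner_conj u, inner_sub_right', star_sub, ← h.inner_conj, ← h.inner_conj]

end HilbertModuleMat

def Epca (m : ℕ) [NeZero m] : Matrix (Fin m) (Fin m) ℂ :=
  Matrix.of fun i j => if i = (0 : Fin m) ∧ j = (0 : Fin m) then (1 : ℂ) else 0

lemma Epca_eq_diagonal (m : ℕ) [NeZero m] :
    Epca m = Matrix.diagonal (Pi.single (0 : Fin m) (1 : ℂ)) := by
  ext i j
  simp only [Epca, Matrix.of_apply, Matrix.diagonal_apply, Pi.single_apply]
  by_cases hi : i = 0 <;> by_cases hj : j = 0 <;> simp_all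
  · exact fun hij => hj hij.symm

lemma Epca_ne_zero (m : ℕ) [NeZero m] : Epca m ≠ 0 := by
  intro hE
  have := congrFun (congrFun hE 0) 0
  simp [Epca] at this

lemma Epca_mul_self (m : ℕ) [NeZero m] : Epca m * Epca m = Epca m := by
  rw [Epca_eq_diagonal, Matrix.diagonal_mul_diagonal]
  refine congrArg Matrix.diagonal (funext fun i => ?_)
  by_cases hi : i = 0 <;> simp [Pi.single_apply, hi]

lemma Epca_isSelfAdjoint (m : ℕ) [NeZero m] : IsSelfAdjoint (Epca m) := by
  ext i j
  simp only [Matrix.conjTranspose_apply, Epca, Matrix.of_apply]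
  by_cases hi : i = 0 <;> by_cases hj : j = 0 <;> simp_all

lemma Epca_rank (m : ℕ) [NeZero m] : (Epca m).rank = 1 := by
  rw [Epca_eq_diagonal, Matrix.rank_diagonal]
  rw [Fintype.card_congr (Equiv.subtypeEquivRight (q := fun i : Fin m => i = 0)
    (fun i => by simp [Pi.single_apply]))]
  exact Fintype.card_subtype_eq 0

/-- RKHM kernel PCA: given samples `w_1,…,w_n` in a Hilbert C*-module over `ℂ^{m×m}` with
Gram matrix `G = [⟨w_s,w_t⟩]` (an `mn × mn` complex matrix) eigen-decomposed as
`G = Σ_s σ_s v_s v_s*` with `σ_1 ≥ … ≥ σ_l > 0` and orthonormal `v_s`, the principal axes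
`p_s = σ_s^{-1/2} W[v_s,0,…,0]` form an orthonormal system with `⟨p_s,p_s⟩` a rank-one
orthogonal projection, and every `w_t` lies in their `ℂ^{m×m}`-linear span. -/
theorem pca_principal_axes
    {m n l : ℕ} [NeZero m] {M : Type*} [NormedAddCommGroup M] [CompleteSpace M]
    (h : HilbertModuleMat m M) (w : Fin n → M)
    (G : Matrix (Fin n × Fin m) (Fin n × Fin m) ℂ)
    (hG : ∀ s t i j, G (s, i) (t, j) = h.inner (w s) (w t) i j)
    (σ : Fin l → ℝ) (hσpos : ∀ s, 0 < σ s) (hσmono : ∀ s t, s ≤ t → σ t ≤ σ s)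
    (v : Fin l → (Fin n × Fin m → ℂ))
    (hortho : ∀ s t, ∑ a, (starRingEnd ℂ) (v s a) * v t a = if s = t then 1 else 0)
    (hdecomp : ∀ a b, G a b = ∑ s, (σ s : ℂ) * v s a * (starRingEnd ℂ) (v s b))
    (p : Fin l → M)
    (hp : ∀ s, p s = ∑ t, h.smul (w t)
      (Matrix.of fun i j =>
        if j = (0 : Fin m) then ((Real.sqrt (σ s))⁻¹ : ℂ) * v s (t, i) else 0)) :
    (∀ s t, s ≠ t → h.inner (p s) (p t) = 0) ∧
    (∀ s, h.Normalized (p s) ∧ IsSelfAdjoint (h.inner (p s) (p s)) ∧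
      (h.inner (p s) (p s)).rank = 1) ∧
    (∀ t, ∃ c : Fin l → Matrix (Fin m) (Fin m) ℂ, w t = ∑ s, h.smul (p s) (c s)) := by
  classical
  have hsqrt_pos : ∀ s : Fin l, 0 < Real.sqrt (σ s) := fun s => Real.sqrt_pos.2 (hσpos s)
  have hsqrt_ne : ∀ s : Fin l, (Real.sqrt (σ s) : ℂ) ≠ 0 := fun s => by
    exact_mod_cast Complex.ofReal_ne_zero.2 (hsqrt_pos s).ne'
  have hsq : ∀ s : Fin l, (Real.sqrt (σ s) : ℂ) * (Real.sqrt (σ s) : ℂ) = (σ s : ℂ) := by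
    intro s
    rw [← Complex.ofReal_mul, Real.mul_self_sqrt (hσpos s).le]
  -- key scalar identity: v s is an eigenvector of G
  have key1 : ∀ (s : Fin l) (y : Fin n × Fin m),
      ∑ x : Fin n × Fin m, (starRingEnd ℂ) (v s x) * G x y
        = (σ s : ℂ) * (starRingEnd ℂ) (v s y) := by
    intro s y
    simp_rw [hdecomp, Finset.mul_sum]
    rw [Finset.sum_comm]
    have step : ∀ r : Fin l,
        ∑ x : Fin n × Fin m, (starRingEnd ℂ) (v s x) * ((σ r : ℂ) * v r x * (starRingEnd ℂ) (v r y)) =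
          (if s = r then 1 else 0) * ((σ r : ℂ) * (starRingEnd ℂ) (v r y)) := by
      intro r
      rw [← hortho s r, Finset.sum_mul]
      exact Finset.sum_congr rfl fun x _ => by ring
    rw [Finset.sum_congr rfl fun r _ => step r]
    simp
  -- the "q" matrices
  set q : Fin l → Fin n → Matrix (Fin m) (Fin m) ℂ := fun s t =>
    Matrix.of fun i j => if j = (0 : Fin m) then ((Real.sqrt (σ s))⁻¹ : ℂ) * v s (t, i) else 0
    with hq
  -- inner products of p s with the data
  have hpw : ∀ (s : Fin l) (t' : Fin n), h.inner (p s) (w t') =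
      Matrix.of fun i j =>
        if i = (0 : Fin m) then (Real.sqrt (σ s) : ℂ) * (starRingEnd ℂ) (v s (t', j)) else 0 := by
    intro s t'
    rw [hp s, h.inner_sum_left']
    have hsl : ∀ a : Fin n, h.inner (h.smul (w a) (q s a)) (w t') =
        star (q s a) * h.inner (w a) (w t') := fun a => h.inner_smul_left' _ _ _
    rw [Finset.sum_congr rfl fun a _ => hsl a]
    ext i j
    simp only [Matrix.sum_apply, Matrix.mul_apply, Matrix.conjTranspose_apply, hq,
      Matrix.of_apply, Matrix.star_apply, eq_self_iff_true, if_true, ite_true, ↓reduceIte]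
    by_cases hi : i = 0
    · subst hi
      simp only [Matrix.of_apply, eq_self_iff_true, ite_true]
      have : ∀ (a : Fin n) (k : Fin m),
          star (((Real.sqrt (σ s))⁻¹ : ℂ) * v s (a, k)) * h.inner (w a) (w t') k j =
          ((Real.sqrt (σ s))⁻¹ : ℂ) * ((starRingEnd ℂ) (v s (a, k)) * G (a, k) (t', j)) := by
        intro a k
        rw [← hG]
        simp only [star_mul', Complex.star_def, ← Complex.ofReal_inv, Complex.conj_ofReal]
        ring
      rw [Finset.sum_congr rfl fun a _ => Finset.sum_congr rfl fun k _ => this a k]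
      simp_rw [← Finset.mul_sum]
      rw [show (∑ a : Fin n, ∑ k : Fin m, (starRingEnd ℂ) (v s (a, k)) * G (a, k) (t', j))
          = ∑ x : Fin n × Fin m, (starRingEnd ℂ) (v s x) * G x (t', j) from
          (Fintype.sum_prod_type (fun x : Fin n × Fin m => (starRingEnd ℂ) (v s x) * G x (t', j))).symm]
      rw [key1 s (t', j), ← mul_assoc]
      congr 1
      field_simp [hsqrt_ne s]
      rw [← hsq s]
      ring
    · simp only [if_neg hi]
      apply Finset.sum_eq_zero; intro a _
      apply Finset.sum_eq_zero; intro k _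
      simp [hi]
  -- the Gram matrix of the p family
  have hpp : ∀ s t : Fin l, h.inner (p s) (p t) = if s = t then Epca m else 0 := by
    intro s t
    rw [hp t, h.inner_sum_right']
    rw [Finset.sum_congr rfl fun b _ => by
      rw [h.inner_smul_right (p s) (w b), hpw s b]]
    ext i j
    simp only [Matrix.sum_apply, Matrix.mul_apply, Matrix.of_apply, hq]
    by_cases hi : i = 0
    · subst hi
      by_cases hj : j = 0
      · subst hj
        simp only [eq_self_iff_true, ite_true]
        have hterm : ∀ (b : Fin n) (k : Fin m),
            (Real.sqrt (σ s) : ℂ) * (starRingEnd ℂ) (v s (b, k)) *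
              (((Real.sqrt (σ t))⁻¹ : ℂ) * v t (b, k)) =
            ((Real.sqrt (σ s) : ℂ) * ((Real.sqrt (σ t))⁻¹ : ℂ)) *
              ((starRingEnd ℂ) (v s (b, k)) * v t (b, k)) := fun b k => by ring
        rw [Finset.sum_congr rfl fun b _ => Finset.sum_congr rfl fun k _ => hterm b k]
        simp_rw [← Finset.mul_sum]
        rw [show (∑ b : Fin n, ∑ k : Fin m, (starRingEnd ℂ) (v s (b, k)) * v t (b, k))
            = ∑ x : Fin n × Fin m, (starRingEnd ℂ) (v s x) * v t x from
            (Fintype.sum_prod_type (fun x : Fin n × Fin m =>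
              (starRingEnd ℂ) (v s x) * v t x)).symm, hortho s t]
        by_cases hst : s = t
        · subst hst
          rw [if_pos rfl, if_pos rfl]
          simp only [Epca, Matrix.of_apply, and_self, eq_self_iff_true, ite_true, mul_one]
          field_simp [hsqrt_ne s]
        · rw [if_neg hst, if_neg hst]
          simp
      · rw [Finset.sum_eq_zero fun b _ => Finset.sum_eq_zero fun k _ => by simp [hj]]
        by_cases hst : s = t <;> simp [hst, Epca, hj]
    · rw [Finset.sum_eq_zero fun b _ => Finset.sum_eq_zero fun k _ => by simp [hi]]
      by_cases hst : s = t <;> simp [hst, Epca, hi]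
  refine ⟨fun s t hst => by rw [hpp s t, if_neg hst], fun s => ?_, fun t => ?_⟩
  · have e := hpp s s
    rw [if_pos rfl] at e
    refine ⟨?_, by rw [e]; exact Epca_isSelfAdjoint m, by rw [e]; exact Epca_rank m⟩
    unfold HilbertModuleMat.Normalized
    rw [e]
    exact ⟨Epca_ne_zero m, Epca_mul_self m⟩
  · refine ⟨fun s => h.inner (p s) (w t), ?_⟩
    have hA : h.inner (w t) (w t)
        = ∑ s, star (h.inner (p s) (w t)) * h.inner (p s) (w t) := by
      ext i j
      simp only [Matrix.sum_apply, Matrix.mul_apply, Matrix.conjTranspose_apply,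
        Matrix.star_apply, hpw, Matrix.of_apply]
      rw [show h.inner (w t) (w t) i j = G (t, i) (t, j) from (hG t t i j).symm,
        hdecomp (t, i) (t, j)]
      refine Finset.sum_congr rfl fun s _ => ?_
      rw [Finset.sum_eq_single (0 : Fin m) (fun k _ hk => by simp [hk])
        (fun h0 => absurd (Finset.mem_univ _) h0)]
      simp only [eq_self_iff_true, ite_true, star_mul', Complex.star_def,
        Complex.conj_conj, Complex.conj_ofReal]
      rw [← hsq s]
      ring
    have hcE : ∀ s, Epca m * h.inner (p s) (w t) = h.inner (p s) (w t) := by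
      intro s
      ext i j
      simp only [Matrix.mul_apply, Epca, Matrix.of_apply, hpw]
      by_cases hi : i = 0
      · subst hi
        rw [Finset.sum_eq_single (0 : Fin m) (fun k _ hk => by simp [hk])
          (fun h0 => absurd (Finset.mem_univ _) h0)]
        simp
      · rw [Finset.sum_eq_zero fun k _ => by simp [hi]]
        simp [hi]
    have e1 : h.inner (w t) (∑ s, h.smul (p s) (h.inner (p s) (w t)))
        = ∑ s, star (h.inner (p s) (w t)) * h.inner (p s) (w t) := by
      rw [h.inner_sum_right']
      refine Finset.sum_congr rfl fun s _ => ?_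
      rw [h.inner_smul_right, h.inner_conj (p s) (w t)]
    have e2 : h.inner (∑ s, h.smul (p s) (h.inner (p s) (w t))) (w t)
        = ∑ s, star (h.inner (p s) (w t)) * h.inner (p s) (w t) := by
      rw [h.inner_sum_left']
      exact Finset.sum_congr rfl fun s _ => h.inner_smul_left' _ _ _
    have e3 : h.inner (∑ s, h.smul (p s) (h.inner (p s) (w t)))
          (∑ s, h.smul (p s) (h.inner (p s) (w t)))
        = ∑ s, star (h.inner (p s) (w t)) * h.inner (p s) (w t) := by
      rw [h.inner_sum_left']
      refine Finset.sum_congr rfl fun s _ => ?_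
      rw [h.inner_smul_left', h.inner_sum_right']
      rw [Finset.sum_congr rfl fun r _ => by
        rw [h.inner_smul_right (p s) (p r), hpp s r]]
      rw [show (∑ r, (if s = r then Epca m else 0) * h.inner (p r) (w t))
          = Epca m * h.inner (p s) (w t) from by
        rw [Finset.sum_eq_single s
          (fun r _ hr => by rw [if_neg fun hsr => hr hsr.symm, zero_mul])
          (fun h0 => absurd (Finset.mem_univ _) h0), if_pos rfl]]
      rw [hcE s]
    have hu : h.inner (w t - ∑ s, h.smul (p s) (h.inner (p s) (w t)))
        (w t - ∑ s, h.smul (p s) (h.inner (p s) (w t))) = 0 := by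
      rw [h.inner_sub_left', h.inner_sub_right', h.inner_sub_right', e1, e2, e3, hA]
      abel
    exact sub_eq_zero.mp (h.inner_definite _ hu)
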